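/- arXiv:math/0401406 — 2 statements merged into one kernel-verified Lean document; each statement's English description precedes it below -/
import Mathlib

section
/- For every complex number s with Re(s) > 0, the double series ∑_{n=0}^∞ (1/2^{n+1}) ∑_{k=0}^n (−1)^k · binom(n,k) · (k+1)^{−s} converges and equals the alternating zeta value ∑_{k=1}^∞ (−1)^{k−1}/k^s. -/
open Filter Complex Finset

noncomputable def aa (s : ℂ) (k : ℕ) : ℂ := (-1) ^ k * ((k + 1 : ℕ) : ℂ) ^ (-s)

noncomputable def SS (s : ℂ) (n : ℕ) : ℂ := ∑ k ∈ range n, aa s k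

lemma key (s : ℂ) (N : ℕ) :
    ∑ n ∈ range N, (1 / 2 ^ (n + 1) : ℂ) * ∑ k ∈ range (n + 1),
        (-1 : ℂ) ^ k * (n.choose k : ℂ) * ((k + 1 : ℕ) : ℂ) ^ (-s)
      = (1 / 2 ^ N) * ∑ k ∈ range (N + 1), (N.choose k : ℂ) * SS s k := by
  induction N with
  | zero => simp [SS]
  | succ N ih =>
      rw [Finset.sum_range_succ, ih]
      have hpas : ∑ k ∈ range (N + 2), ((N+1).choose k : ℂ) * SS s k
          = ∑ k ∈ range (N + 1), (N.choose k : ℂ) * (SS s k + SS s (k+1)) := by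
        have h1 : ∑ k ∈ range (N + 2), ((N+1).choose k : ℂ) * SS s k
            = ∑ k ∈ range (N + 1), ((N+1).choose (k+1) : ℂ) * SS s (k+1) := by
          rw [Finset.sum_range_succ'] ; simp [SS]
        have h2 : ∑ k ∈ range (N + 1), ((N.choose (k+1) : ℂ)) * SS s (k+1)
            = ∑ k ∈ range (N + 1), (N.choose k : ℂ) * SS s k := by
          have h3 : ∑ k ∈ range (N+2), (N.choose k : ℂ) * SS s k
              = ∑ k ∈ range (N+1), (N.choose k : ℂ) * SS s k := by
            rw [Finset.sum_range_succ]; simp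
          rw [← h3]
          conv_rhs => rw [Finset.sum_range_succ']
          simp [SS]
        rw [h1]
        simp only [Nat.choose_succ_succ, Nat.cast_add, add_mul, mul_add,
          Finset.sum_add_distrib, h2]
        rw [add_comm]
      have hterm : ∀ k, (N.choose k : ℂ) * (SS s k + SS s (k+1))
          = 2 * ((N.choose k : ℂ) * SS s k) + (N.choose k : ℂ) * aa s k := by
        intro k
        have : SS s (k+1) = SS s k + aa s k := Finset.sum_range_succ _ _
        rw [this]; ring
      rw [hpas]
      simp only [hterm, Finset.sum_add_distrib, ← Finset.mul_sum]
      have : ∑ k ∈ range (N + 1),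
          (-1 : ℂ) ^ k * (N.choose k : ℂ) * ((k + 1 : ℕ) : ℂ) ^ (-s)
          = ∑ k ∈ range (N + 1), (N.choose k : ℂ) * aa s k := by
        apply Finset.sum_congr rfl; intro k _; rw [aa]; ring
      rw [this]
      field_simp
      ring


lemma toeplitz {g : ℕ → ℝ} (hg0 : ∀ k, 0 ≤ g k) (hgM : ∃ M, ∀ k, g k ≤ M)
    (hg : Tendsto g atTop (nhds 0)) :
    Tendsto (fun N : ℕ => (1 / 2 ^ N) * ∑ k ∈ range (N + 1), (N.choose k : ℝ) * g k)
      atTop (nhds 0) := by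
  obtain ⟨M, hM⟩ := hgM
  have hM0 : 0 ≤ M := le_trans (hg0 0) (hM 0)
  have hnonneg : ∀ N : ℕ, 0 ≤ (1 / 2 ^ N : ℝ) * ∑ k ∈ range (N + 1), (N.choose k : ℝ) * g k := by
    intro N
    apply mul_nonneg (by positivity)
    exact Finset.sum_nonneg fun k _ => mul_nonneg (Nat.cast_nonneg _) (hg0 k)
  rw [tendsto_order]
  constructor
  · intro a ha
    filter_upwards with N
    exact lt_of_lt_of_le ha (hnonneg N)
  · intro ε hε
    -- choose K with g k < ε/2 for k ≥ K
    obtain ⟨K, hK⟩ := (Metric.tendsto_atTop.mp hg (ε / 2) (by positivity))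
    have hKg : ∀ k, K ≤ k → g k ≤ ε / 2 := by
      intro k hk
      have := hK k hk
      rw [Real.dist_eq, sub_zero, _root_.abs_of_nonneg (hg0 k)] at this
      exact this.le
    -- head tends to zero
    have hhead : Tendsto (fun N : ℕ => ∑ k ∈ range K, M * ((N : ℝ) ^ k / 2 ^ N))
        atTop (nhds 0) := by
      have : Tendsto (fun N : ℕ => ∑ k ∈ range K, M * ((N : ℝ) ^ k / 2 ^ N))
          atTop (nhds (∑ k ∈ range K, M * 0)) := by
        apply tendsto_finset_sum
        intro k _
        exact (tendsto_pow_const_div_const_pow_of_one_lt k one_lt_two).const_mul M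
      simpa using this
    have hev : ∀ᶠ N : ℕ in atTop,
        (∑ k ∈ range K, M * ((N : ℝ) ^ k / 2 ^ N)) < ε / 2 ∧ K ≤ N := by
      filter_upwards [hhead.eventually (gt_mem_nhds (by positivity : (0:ℝ) < ε/2)),
        eventually_ge_atTop K] with N h1 h2
      exact ⟨h1, h2⟩
    filter_upwards [hev] with N ⟨h1, h2⟩
    have hsplit : ∑ k ∈ range (N + 1), (N.choose k : ℝ) * g k
        = ∑ k ∈ range K, (N.choose k : ℝ) * g k
          + ∑ k ∈ Ico K (N + 1), (N.choose k : ℝ) * g k := by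
      rw [Finset.range_eq_Ico, ← Finset.sum_Ico_consecutive _ (Nat.zero_le K) (by omega)]
      rw [Finset.range_eq_Ico]
    have hhead_le : (1 / 2 ^ N : ℝ) * ∑ k ∈ range K, (N.choose k : ℝ) * g k
        ≤ ∑ k ∈ range K, M * ((N : ℝ) ^ k / 2 ^ N) := by
      rw [Finset.mul_sum]
      apply Finset.sum_le_sum
      intro k _
      have h1 : (N.choose k : ℝ) ≤ (N : ℝ) ^ k := by
        exact_mod_cast Nat.choose_le_pow N k
      have : (N.choose k : ℝ) * g k ≤ (N : ℝ) ^ k * M :=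
        mul_le_mul h1 (hM k) (hg0 k) (by positivity)
      calc (1 / 2 ^ N : ℝ) * ((N.choose k : ℝ) * g k)
          ≤ (1 / 2 ^ N : ℝ) * ((N : ℝ) ^ k * M) := by
            apply mul_le_mul_of_nonneg_left this (by positivity)
        _ = M * ((N : ℝ) ^ k / 2 ^ N) := by ring
    have htail_le : (1 / 2 ^ N : ℝ) * ∑ k ∈ Ico K (N + 1), (N.choose k : ℝ) * g k
        ≤ ε / 2 := by
      have h4 : ∑ k ∈ Ico K (N + 1), (N.choose k : ℝ) * g k
          ≤ ∑ k ∈ Ico K (N + 1), (N.choose k : ℝ) * (ε / 2) := by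
        apply Finset.sum_le_sum
        intro k hk
        exact mul_le_mul_of_nonneg_left (hKg k (Finset.mem_Ico.mp hk).1) (Nat.cast_nonneg _)
      have h5 : ∑ k ∈ Ico K (N + 1), (N.choose k : ℝ) * (ε / 2)
          ≤ ∑ k ∈ range (N + 1), (N.choose k : ℝ) * (ε / 2) := by
        apply Finset.sum_le_sum_of_subset_of_nonneg
        · rw [Finset.range_eq_Ico]; exact Finset.Ico_subset_Ico (Nat.zero_le _) le_rfl
        · intro k _ _; positivity
      have h6 : ∑ k ∈ range (N + 1), (N.choose k : ℝ) * (ε / 2) = 2 ^ N * (ε / 2) := by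
        rw [← Finset.sum_mul]
        norm_cast
        rw [Nat.sum_range_choose]
      calc (1 / 2 ^ N : ℝ) * ∑ k ∈ Ico K (N + 1), (N.choose k : ℝ) * g k
          ≤ (1 / 2 ^ N : ℝ) * (2 ^ N * (ε / 2)) := by
            apply mul_le_mul_of_nonneg_left _ (by positivity)
            exact le_trans h4 (le_trans h5 h6.le)
        _ = ε / 2 := by field_simp
    calc (1 / 2 ^ N : ℝ) * ∑ k ∈ range (N + 1), (N.choose k : ℝ) * g k
        = (1 / 2 ^ N : ℝ) * ∑ k ∈ range K, (N.choose k : ℝ) * g k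
          + (1 / 2 ^ N : ℝ) * ∑ k ∈ Ico K (N + 1), (N.choose k : ℝ) * g k := by
          rw [hsplit]; ring
      _ < ε / 2 + ε / 2 := by
          apply add_lt_add_of_lt_of_le (lt_of_le_of_lt hhead_le h1) htail_le
      _ = ε := by ring

lemma norm_geom (n : ℕ) : ‖∑ i ∈ range n, (-1 : ℂ) ^ i‖ ≤ 1 := by
  rw [neg_one_geom_sum]
  split_ifs <;> simp

lemma diff_bound {s : ℂ} (hs : 0 < s.re) (k : ℕ) :
    ‖((k + 2 : ℕ) : ℂ) ^ (-s) - ((k + 1 : ℕ) : ℂ) ^ (-s)‖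
      ≤ ‖s‖ * ((k + 1 : ℝ)) ^ (-(s.re + 1)) := by
  have hs0 : s ≠ 0 := fun h => by simp [h] at hs
  set φ : ℝ → ℂ := fun y => (y : ℂ) ^ (-s) with hφ
  have hderiv : ∀ x ∈ Set.Icc ((k : ℝ) + 1) ((k : ℝ) + 2),
      HasDerivWithinAt φ (-s * (x : ℂ) ^ (-s - 1)) (Set.Icc ((k : ℝ) + 1) ((k : ℝ) + 2)) x := by
    intro x hx
    have hx0 : x ≠ 0 := by
      have : (1 : ℝ) ≤ x := le_trans (by linarith) hx.1
      linarith
    have hr : (-s - 1 : ℂ) ≠ -1 := by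
      intro h
      apply hs0
      have : (-s : ℂ) = 0 := by linear_combination h
      simpa [neg_eq_zero] using this
    have h := hasDerivAt_ofReal_cpow_const' hx0 hr
    have h2 : HasDerivAt (fun y : ℝ => -s * ((y : ℂ) ^ (-s - 1 + 1) / (-s - 1 + 1)))
        (-s * (x : ℂ) ^ (-s - 1)) x := h.const_mul (-s)
    have heq : (fun y : ℝ => -s * ((y : ℂ) ^ (-s - 1 + 1) / (-s - 1 + 1))) = φ := by
      funext y
      have : (-s - 1 + 1 : ℂ) = -s := by ring
      rw [this, hφ]
      field_simp
    rw [heq] at h2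
    exact h2.hasDerivWithinAt
  have hbound : ∀ x ∈ Set.Icc ((k : ℝ) + 1) ((k : ℝ) + 2),
      ‖-s * (x : ℂ) ^ (-s - 1)‖ ≤ ‖s‖ * ((k + 1 : ℝ)) ^ (-(s.re + 1)) := by
    intro x hx
    have hx1 : (0 : ℝ) < (k : ℝ) + 1 := by positivity
    have hx0 : (0 : ℝ) < x := lt_of_lt_of_le hx1 hx.1
    rw [norm_mul, norm_neg]
    apply mul_le_mul_of_nonneg_left _ (norm_nonneg s)
    have : ‖(x : ℂ) ^ (-s - 1)‖ = x ^ ((-s - 1).re) := by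
      rw [Complex.norm_cpow_eq_rpow_re_of_pos hx0]
    rw [this]
    have hre : (-s - 1).re = -(s.re + 1) := by simp [Complex.sub_re, Complex.neg_re]; ring
    rw [hre]
    exact Real.rpow_le_rpow_of_nonpos hx1 hx.1 (by linarith)
  have := Convex.norm_image_sub_le_of_norm_hasDerivWithin_le hderiv hbound
    (convex_Icc _ _) (Set.left_mem_Icc.mpr (by linarith)) (Set.right_mem_Icc.mpr (by linarith))
  have hcast1 : ((k + 2 : ℕ) : ℂ) = (((k : ℝ) + 2 : ℝ) : ℂ) := by push_cast; ring
  have hcast2 : ((k + 1 : ℕ) : ℂ) = (((k : ℝ) + 1 : ℝ) : ℂ) := by push_cast; ring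
  rw [hcast1, hcast2]
  calc ‖φ ((k : ℝ) + 2) - φ ((k : ℝ) + 1)‖
      ≤ ‖s‖ * ((k + 1 : ℝ)) ^ (-(s.re + 1)) * ‖((k : ℝ) + 2) - ((k : ℝ) + 1)‖ := this
    _ = ‖s‖ * ((k + 1 : ℝ)) ^ (-(s.re + 1)) := by norm_num

lemma SS_conv {s : ℂ} (hs : 0 < s.re) : ∃ L : ℂ, Tendsto (SS s) atTop (nhds L) := by
  set f : ℕ → ℂ := fun k => ((k + 1 : ℕ) : ℂ) ^ (-s) with hf
  set z : ℕ → ℂ := fun k => (-1 : ℂ) ^ k with hz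
  set G : ℕ → ℂ := fun n => ∑ i ∈ range n, z i with hG
  have hparts : ∀ m : ℕ, SS s (m + 1)
      = f m * G (m + 1) - ∑ i ∈ range m, (f (i + 1) - f i) * G (i + 1) := by
    intro m
    have : SS s (m + 1) = ∑ i ∈ range (m + 1), f i • z i := by
      rw [SS]
      apply Finset.sum_congr rfl
      intro k _
      simp only [smul_eq_mul, aa, hf, hz]
      ring
    rw [this, Finset.sum_range_by_parts]
    simp [smul_eq_mul, hG]
  -- the series of differences is absolutely convergent
  have hsummable : Summable (fun i : ℕ => (f (i + 1) - f i) * G (i + 1)) := by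
    apply Summable.of_norm_bounded (g := fun i : ℕ => ‖s‖ * ((i + 1 : ℝ)) ^ (-(s.re + 1)))
    · apply Summable.mul_left
      have h1 : Summable (fun n : ℕ => (n : ℝ) ^ (-(s.re + 1))) :=
        Real.summable_nat_rpow.mpr (by linarith)
      have := (summable_nat_add_iff 1).mpr h1
      simpa using this
    · intro i
      rw [norm_mul]
      calc ‖f (i + 1) - f i‖ * ‖G (i + 1)‖
          ≤ ‖f (i + 1) - f i‖ * 1 := by
            apply mul_le_mul_of_nonneg_left (norm_geom _) (norm_nonneg _)
        _ = ‖f (i + 1) - f i‖ := mul_one _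
        _ ≤ ‖s‖ * ((i + 1 : ℝ)) ^ (-(s.re + 1)) := by
            have : f (i + 1) - f i = ((i + 2 : ℕ) : ℂ) ^ (-s) - ((i + 1 : ℕ) : ℂ) ^ (-s) := by
              simp only [hf]
            rw [this]
            exact diff_bound hs i
  have hfirst : Tendsto (fun m : ℕ => f m * G (m + 1)) atTop (nhds 0) := by
    have htend : Tendsto (fun m : ℕ => ((m + 1 : ℝ)) ^ (-s.re)) atTop (nhds 0) := by
      have h1 : Tendsto (fun x : ℝ => x ^ (-s.re)) atTop (nhds 0) :=
        tendsto_rpow_neg_atTop hs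
      have h2 : Tendsto (fun m : ℕ => (m : ℝ) + 1) atTop atTop :=
        tendsto_atTop_add_const_right _ 1 tendsto_natCast_atTop_atTop
      exact h1.comp h2
    apply squeeze_zero_norm _ htend
    intro m
    rw [norm_mul]
    calc ‖f m‖ * ‖G (m + 1)‖ ≤ ‖f m‖ * 1 :=
          mul_le_mul_of_nonneg_left (norm_geom _) (norm_nonneg _)
      _ = ‖f m‖ := mul_one _
      _ = ((m + 1 : ℝ)) ^ (-s.re) := by
          rw [hf]
          simp only
          rw [Complex.norm_natCast_cpow_of_pos (Nat.succ_pos m)]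
          push_cast
          simp
  have hsecond : Tendsto (fun m : ℕ => ∑ i ∈ range m, (f (i + 1) - f i) * G (i + 1))
      atTop (nhds (∑' i, (f (i + 1) - f i) * G (i + 1))) :=
    hsummable.hasSum.tendsto_sum_nat
  refine ⟨-(∑' i, (f (i + 1) - f i) * G (i + 1)), ?_⟩
  rw [← tendsto_add_atTop_iff_nat 1]
  have : Tendsto (fun m : ℕ => f m * G (m + 1) - ∑ i ∈ range m, (f (i + 1) - f i) * G (i + 1))
      atTop (nhds (0 - ∑' i, (f (i + 1) - f i) * G (i + 1))) := hfirst.sub hsecond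
  rw [zero_sub] at this
  exact this.congr (fun m => (hparts m).symm)

/-- For Re(s) > 0, the Hasse/Euler-transform double series converges and equals
the alternating zeta value ∑_{k=1}^∞ (−1)^{k−1}/k^s. -/
theorem stmt_7 (s : ℂ) (hs : 0 < s.re) :
    ∃ L : ℂ,
      Tendsto (fun N : ℕ => ∑ k ∈ Finset.range N,
          (-1 : ℂ) ^ k / ((k + 1 : ℕ) : ℂ) ^ s) atTop (nhds L) ∧
      Tendsto (fun N : ℕ => ∑ n ∈ Finset.range N,
          (1 / 2 ^ (n + 1) : ℂ) * ∑ k ∈ Finset.range (n + 1),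
            (-1 : ℂ) ^ k * (n.choose k : ℂ) * ((k + 1 : ℕ) : ℂ) ^ (-s))
        atTop (nhds L) := by
  obtain ⟨L, hL⟩ := SS_conv hs
  refine ⟨L, ?_, ?_⟩
  · -- first series equals SS
    have : (fun N : ℕ => ∑ k ∈ Finset.range N, (-1 : ℂ) ^ k / ((k + 1 : ℕ) : ℂ) ^ s) = SS s := by
      funext N
      rw [SS]
      apply Finset.sum_congr rfl
      intro k _
      rw [aa, Complex.cpow_neg, div_eq_mul_inv]
    rw [this]
    exact hL
  · -- second series
    set U : ℕ → ℂ := fun N => (1 / 2 ^ N) * ∑ k ∈ range (N + 1), (N.choose k : ℂ) * SS s k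
      with hU
    have hkey : (fun N : ℕ => ∑ n ∈ Finset.range N,
        (1 / 2 ^ (n + 1) : ℂ) * ∑ k ∈ Finset.range (n + 1),
          (-1 : ℂ) ^ k * (n.choose k : ℂ) * ((k + 1 : ℕ) : ℂ) ^ (-s)) = U := by
      funext N; exact key s N
    rw [hkey]
    -- the error sequence
    set g : ℕ → ℝ := fun k => ‖SS s k - L‖ with hg
    have hg0 : ∀ k, 0 ≤ g k := fun k => norm_nonneg _
    have hgtend : Tendsto g atTop (nhds 0) := by
      have h1 : Tendsto (fun k => SS s k - L) atTop (nhds 0) := by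
        simpa using hL.sub (tendsto_const_nhds (x := L))
      simpa using h1.norm
    have hgM : ∃ M, ∀ k, g k ≤ M := by
      obtain ⟨M, hM⟩ := hgtend.bddAbove_range
      exact ⟨M, fun k => hM ⟨k, rfl⟩⟩
    have htoe := toeplitz hg0 hgM hgtend
    have hdiff : ∀ N : ℕ, ‖U N - L‖
        ≤ (1 / 2 ^ N) * ∑ k ∈ range (N + 1), (N.choose k : ℝ) * g k := by
      intro N
      have hsum2 : ∑ k ∈ range (N + 1), (N.choose k : ℂ) = 2 ^ N := by
        have := Nat.sum_range_choose N
        exact_mod_cast congrArg (Nat.cast : ℕ → ℂ) this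
      have hUL : U N - L = (1 / 2 ^ N : ℂ) * ∑ k ∈ range (N + 1),
          (N.choose k : ℂ) * (SS s k - L) := by
        rw [hU]
        simp only [mul_sub, Finset.sum_sub_distrib, ← Finset.sum_mul, hsum2, mul_sub]
        have h2 : (1 / 2 ^ N : ℂ) * ((2 : ℂ) ^ N * L) = L := by
          field_simp
        rw [h2]
      rw [hUL, norm_mul]
      have hn1 : ‖(1 / 2 ^ N : ℂ)‖ = (1 / 2 ^ N : ℝ) := by
        simp [norm_div, norm_pow]
      rw [hn1]
      apply mul_le_mul_of_nonneg_left _ (by positivity)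
      calc ‖∑ k ∈ range (N + 1), (N.choose k : ℂ) * (SS s k - L)‖
          ≤ ∑ k ∈ range (N + 1), ‖(N.choose k : ℂ) * (SS s k - L)‖ := norm_sum_le _ _
        _ = ∑ k ∈ range (N + 1), (N.choose k : ℝ) * g k := by
            apply Finset.sum_congr rfl
            intro k _
            rw [norm_mul, hg]
            congr 1
            simp
    rw [← tendsto_sub_nhds_zero_iff]
    exact squeeze_zero_norm hdiff htoe
end

section
/- The double series ∑_{n=0}^∞ (1/2^{n+1}) ∑_{k=0}^n (−1)^k · binom(n,k) · ln((k+2)/(k+1)) converges and its sum equals ln(π/2). -/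
open Filter Real

private noncomputable def bb (k : ℕ) : ℝ := (-1)^k * Real.log (((k:ℝ)+2)/((k:ℝ)+1))

private noncomputable def BB (N : ℕ) : ℝ := ∑ k ∈ Finset.range N, bb k

private lemma my_sum_choose_zero (k : ℕ) : ∑ j ∈ Finset.range (k+1), Nat.choose 0 j = 1 := by
  induction k with
  | zero => simp
  | succ k ih => rw [Finset.sum_range_succ, ih]; simp

private lemma my_sum_choose_rec (N k : ℕ) :
    ∑ j ∈ Finset.range (k+1), Nat.choose (N+1) j + Nat.choose N k
      = 2 * ∑ j ∈ Finset.range (k+1), Nat.choose N j := by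
  induction k with
  | zero => simp
  | succ k ih =>
      rw [Finset.sum_range_succ, Finset.sum_range_succ (f := fun j => Nat.choose N j),
        Nat.choose_succ_succ]
      simp only [Nat.succ_eq_add_one] at *
      omega

private lemma my_sum_choose_full {N k : ℕ} (h : N ≤ k) :
    ∑ j ∈ Finset.range (k+1), Nat.choose N j = 2^N := by
  rw [← Nat.sum_range_choose N]
  symm
  apply Finset.sum_subset
  · exact Finset.range_subset_range.2 (by omega)
  · intro x hx hnx
    simp only [Finset.mem_range] at hx hnx
    exact Nat.choose_eq_zero_of_lt (by omega)

private lemma my_w_closed (N k : ℕ) :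
    ∑ n ∈ Finset.Ico k N, (n.choose k : ℝ)/2^(n+1)
      = 1 - (∑ j ∈ Finset.range (k+1), (N.choose j : ℝ))/2^N := by
  induction N with
  | zero =>
      rw [Finset.Ico_eq_empty (by omega), Finset.sum_empty]
      have h0 : (∑ j ∈ Finset.range (k+1), ((Nat.choose 0 j : ℕ) : ℝ)) = 1 := by
        exact_mod_cast my_sum_choose_zero k
      rw [h0]
      norm_num
  | succ N ih =>
      by_cases hk : k ≤ N
      · rw [Finset.sum_Ico_succ_top hk, ih]
        have hrec : (∑ j ∈ Finset.range (k+1), ((N+1).choose j : ℝ)) + (N.choose k : ℝ)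
            = 2 * ∑ j ∈ Finset.range (k+1), (N.choose j : ℝ) := by
          exact_mod_cast my_sum_choose_rec N k
        have h2 : (2:ℝ)^N ≠ 0 := by positivity
        linear_combination (1/(2:ℝ)^(N+1)) * hrec
      · rw [Finset.Ico_eq_empty (by omega), Finset.sum_empty]
        have h0 : (∑ j ∈ Finset.range (k+1), ((N+1).choose j : ℝ)) = 2^(N+1) := by
          exact_mod_cast my_sum_choose_full (show N+1 ≤ k by omega)
        rw [h0, div_self (by positivity)]
        norm_num

private lemma my_sum_choose_real (N : ℕ) :
    (∑ j ∈ Finset.range N, (N.choose j : ℝ)) = 2^N - 1 := by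
  have h : ∑ j ∈ Finset.range (N+1), (N.choose j : ℝ) = 2^N := by
    exact_mod_cast Nat.sum_range_choose N
  rw [Finset.sum_range_succ, Nat.choose_self] at h
  push_cast at h ⊢
  linarith

private lemma my_tendsto_of_even_odd {f : ℕ → ℝ} {l : ℝ}
    (he : Tendsto (fun m => f (2*m)) atTop (nhds l))
    (ho : Tendsto (fun m => f (2*m+1)) atTop (nhds l)) :
    Tendsto f atTop (nhds l) := by
  rw [Metric.tendsto_atTop] at he ho ⊢
  intro ε hε
  obtain ⟨M1, h1⟩ := he ε hε
  obtain ⟨M2, h2⟩ := ho ε hε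
  refine ⟨2*M1 + 2*M2 + 1, fun n hn => ?_⟩
  rcases Nat.even_or_odd n with ⟨m, hm⟩ | ⟨m, hm⟩
  · have hnm : n = 2*m := by omega
    rw [hnm]; exact h1 m (by omega)
  · have hnm : n = 2*m+1 := by omega
    rw [hnm]; exact h2 m (by omega)

private lemma my_BB_even (m : ℕ) : BB (2*m)
    = Real.log (∏ i ∈ Finset.range m, ((2:ℝ)*i+2)/(2*i+1) * ((2*i+2)/(2*i+3))) := by
  induction m with
  | zero => simp [BB]
  | succ m ih =>
      have e1 : 2*(m+1) = (2*m+1)+1 := by omega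
      rw [e1]
      show ∑ k ∈ Finset.range ((2*m+1)+1), bb k = _
      rw [Finset.sum_range_succ, Finset.sum_range_succ]
      have hBB : ∑ k ∈ Finset.range (2*m), bb k = BB (2*m) := rfl
      rw [hBB, ih, Finset.prod_range_succ]
      have hp : (0:ℝ) < ∏ i ∈ Finset.range m, ((2:ℝ)*i+2)/(2*i+1) * ((2*i+2)/(2*i+3)) := by
        apply Finset.prod_pos; intro i _; positivity
      rw [Real.log_mul hp.ne' (by positivity), Real.log_mul (by positivity) (by positivity)]
      have hbb1 : bb (2*m) = Real.log (((2:ℝ)*m+2)/(2*m+1)) := by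
        simp only [bb, pow_mul, neg_one_sq, one_pow, one_mul]
        push_cast
        ring_nf
      have hbb2 : bb (2*m+1) = Real.log (((2:ℝ)*m+2)/(2*m+3)) := by
        have hpow : (-1:ℝ)^(2*m+1) = -1 := by
          rw [pow_succ, pow_mul]; norm_num
        simp only [bb]
        rw [hpow, neg_one_mul, ← Real.log_inv, inv_div]
        push_cast
        ring_nf
      rw [hbb1, hbb2]
      ring

private lemma my_bb_tendsto : Tendsto bb atTop (nhds 0) := by
  have h1 : Tendsto (fun k : ℕ => ((k:ℝ)+2)/((k:ℝ)+1)) atTop (nhds 1) := by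
    have heq : (fun k : ℕ => ((k:ℝ)+2)/((k:ℝ)+1)) = fun k : ℕ => 1 + 1/((k:ℝ)+1) := by
      funext k
      have hk : ((k:ℝ)+1) ≠ 0 := by positivity
      field_simp
      ring
    rw [heq]
    simpa using tendsto_const_nhds.add (tendsto_one_div_add_atTop_nhds_zero_nat (𝕜 := ℝ))
  have h2 : Tendsto (fun k : ℕ => Real.log (((k:ℝ)+2)/((k:ℝ)+1))) atTop (nhds 0) := by
    have := (Real.continuousAt_log one_ne_zero).tendsto.comp h1
    rw [Real.log_one] at this
    exact this
  apply squeeze_zero_norm (a := fun k : ℕ => |Real.log (((k:ℝ)+2)/((k:ℝ)+1))|)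
  · intro n
    have : ‖bb n‖ = |Real.log (((n:ℝ)+2)/((n:ℝ)+1))| := by
      simp [bb, abs_mul]
    rw [this]
  · simpa using h2.abs

private lemma my_BB_tendsto : Tendsto BB atTop (nhds (Real.log (Real.pi/2))) := by
  have he : Tendsto (fun m => BB (2*m)) atTop (nhds (Real.log (Real.pi/2))) := by
    have hW := Real.tendsto_prod_pi_div_two
    have hpi : Real.pi/2 ≠ 0 := by positivity
    have hlog := (Real.continuousAt_log hpi).tendsto.comp hW
    exact hlog.congr (fun m => (my_BB_even m).symm)
  have h2m : Tendsto (fun m : ℕ => 2*m) atTop atTop :=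
    tendsto_atTop_atTop.mpr (fun b => ⟨b, fun a ha => by omega⟩)
  have ho : Tendsto (fun m => BB (2*m+1)) atTop (nhds (Real.log (Real.pi/2))) := by
    have h := he.add (my_bb_tendsto.comp h2m)
    rw [add_zero] at h
    refine h.congr (fun m => ?_)
    show BB (2*m) + bb (2*m) = BB (2*m+1)
    simp only [BB, Finset.sum_range_succ]
  exact my_tendsto_of_even_odd he ho

private lemma my_key_reg {c : ℕ → ℝ} (hc : Tendsto c atTop (nhds 0)) :
    Tendsto (fun N : ℕ => (∑ j ∈ Finset.range N, (N.choose j : ℝ) * c j)/2^N)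
      atTop (nhds 0) := by
  rw [Metric.tendsto_atTop]
  intro ε hε
  obtain ⟨K0, hK0⟩ := Metric.tendsto_atTop.1 hc 1 one_pos
  set M : ℝ := 1 + ∑ j ∈ Finset.range K0, |c j| with hM
  have hs0 : (0:ℝ) ≤ ∑ i ∈ Finset.range K0, |c i| :=
    Finset.sum_nonneg (fun i _ => abs_nonneg _)
  have hMb : ∀ j, |c j| ≤ M := by
    intro j
    by_cases hj : j < K0
    · have h := Finset.single_le_sum (f := fun i => |c i|) (fun i _ => abs_nonneg _)
        (Finset.mem_range.2 hj)
      simp only [hM]; linarith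
    · have h := hK0 j (by omega)
      rw [Real.dist_eq, sub_zero] at h
      simp only [hM]; linarith
  obtain ⟨K, hK⟩ := Metric.tendsto_atTop.1 hc (ε/4) (by positivity)
  have hpoly : Tendsto (fun N : ℕ => M * K * ((N:ℝ)^K / 2^N)) atTop (nhds 0) := by
    have h := tendsto_pow_const_div_const_pow_of_one_lt K (by norm_num : (1:ℝ) < 2)
    simpa using h.const_mul (M*K)
  have hev : ∀ᶠ N : ℕ in atTop, M * K * ((N:ℝ)^K / 2^N) < ε/2 :=
    hpoly.eventually_lt_const (by positivity)
  obtain ⟨N0, hN0⟩ := eventually_atTop.1 hev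
  refine ⟨max N0 (K+1), fun n hn => ?_⟩
  have hnK : K + 1 ≤ n := le_trans (le_max_right _ _) hn
  have hn0 : N0 ≤ n := le_trans (le_max_left _ _) hn
  have h2n : (0:ℝ) < 2^n := by positivity
  rw [Real.dist_eq, sub_zero, abs_div, abs_of_pos h2n]
  have hsplit : ∑ j ∈ Finset.range n, (n.choose j:ℝ) * c j
      = ∑ j ∈ Finset.range K, (n.choose j:ℝ) * c j
        + ∑ j ∈ Finset.Ico K n, (n.choose j:ℝ) * c j :=
    (Finset.sum_range_add_sum_Ico _ (by omega)).symm
  have hb1 : |∑ j ∈ Finset.range K, (n.choose j:ℝ) * c j| ≤ M * K * (n:ℝ)^K := by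
    calc |∑ j ∈ Finset.range K, (n.choose j:ℝ) * c j|
        ≤ ∑ j ∈ Finset.range K, |(n.choose j:ℝ) * c j| := Finset.abs_sum_le_sum_abs _ _
      _ ≤ ∑ j ∈ Finset.range K, (n:ℝ)^K * M := by
          apply Finset.sum_le_sum
          intro j hj
          rw [abs_mul, abs_of_nonneg (by positivity : (0:ℝ) ≤ (n.choose j:ℝ))]
          have hcp : (n.choose j : ℝ) ≤ (n:ℝ)^K := by
            have hh1 := Nat.choose_le_pow n j
            have hh2 : n^j ≤ n^K :=
              Nat.pow_le_pow_right (by omega) (le_of_lt (Finset.mem_range.1 hj))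
            exact_mod_cast le_trans hh1 hh2
          exact mul_le_mul hcp (hMb j) (abs_nonneg _) (by positivity)
      _ = K * ((n:ℝ)^K * M) := by
          rw [Finset.sum_const, Finset.card_range, nsmul_eq_mul]
      _ = M * K * (n:ℝ)^K := by ring
  have hb2 : |∑ j ∈ Finset.Ico K n, (n.choose j:ℝ) * c j| ≤ (ε/4) * 2^n := by
    calc |∑ j ∈ Finset.Ico K n, (n.choose j:ℝ) * c j|
        ≤ ∑ j ∈ Finset.Ico K n, |(n.choose j:ℝ) * c j| := Finset.abs_sum_le_sum_abs _ _
      _ ≤ ∑ j ∈ Finset.Ico K n, (n.choose j:ℝ) * (ε/4) := by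
          apply Finset.sum_le_sum
          intro j hj
          rw [abs_mul, abs_of_nonneg (by positivity : (0:ℝ) ≤ (n.choose j:ℝ))]
          apply mul_le_mul_of_nonneg_left ?_ (by positivity)
          have h := hK j (Finset.mem_Ico.1 hj).1
          rw [Real.dist_eq, sub_zero] at h
          exact h.le
      _ = (∑ j ∈ Finset.Ico K n, (n.choose j:ℝ)) * (ε/4) := by rw [← Finset.sum_mul]
      _ ≤ (2^n) * (ε/4) := by
          apply mul_le_mul_of_nonneg_right ?_ (by positivity)
          have h1 : ∑ j ∈ Finset.Ico K n, n.choose j ≤ ∑ j ∈ Finset.range (n+1), n.choose j := by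
            apply Finset.sum_le_sum_of_subset
            intro x hx
            simp only [Finset.mem_Ico, Finset.mem_range] at *
            omega
          have h2 := Nat.sum_range_choose n
          exact_mod_cast le_trans h1 (le_of_eq h2)
      _ = (ε/4) * 2^n := by ring
  have habs : |∑ j ∈ Finset.range n, (n.choose j:ℝ) * c j| ≤ M*K*(n:ℝ)^K + (ε/4)*2^n := by
    rw [hsplit]
    exact le_trans (abs_add_le _ _) (add_le_add hb1 hb2)
  have hN0n := hN0 n hn0
  calc |∑ j ∈ Finset.range n, (n.choose j:ℝ) * c j| / 2^n
      ≤ (M*K*(n:ℝ)^K + (ε/4)*2^n)/2^n := by gcongr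
    _ = M*K*((n:ℝ)^K/2^n) + ε/4 := by
        rw [add_div, mul_div_assoc, mul_div_cancel_right₀ _ (ne_of_gt h2n)]
    _ < ε/2 + ε/4 := by linarith
    _ < ε := by linarith

private lemma my_partial_sum (N : ℕ) :
    (∑ n ∈ Finset.range N, (1 / 2 ^ (n + 1) : ℝ) * ∑ k ∈ Finset.range (n + 1),
        (-1 : ℝ) ^ k * (n.choose k : ℝ) * Real.log ((k + 2) / (k + 1)))
      = (BB N + ∑ j ∈ Finset.range N, (N.choose j : ℝ) * BB j) / 2^N := by
  have swap1 : (∑ n ∈ Finset.range N, (1 / 2 ^ (n + 1) : ℝ) * ∑ k ∈ Finset.range (n + 1),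
        (-1 : ℝ) ^ k * (n.choose k : ℝ) * Real.log ((k + 2) / (k + 1)))
      = ∑ k ∈ Finset.range N, bb k * ∑ n ∈ Finset.Ico k N, (n.choose k:ℝ)/2^(n+1) := by
    calc (∑ n ∈ Finset.range N, (1 / 2 ^ (n + 1) : ℝ) * ∑ k ∈ Finset.range (n + 1),
          (-1 : ℝ) ^ k * (n.choose k : ℝ) * Real.log ((k + 2) / (k + 1)))
        = ∑ n ∈ Finset.Ico 0 N, ∑ k ∈ Finset.Ico 0 (n+1),
            bb k * ((n.choose k:ℝ)/2^(n+1)) := by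
          rw [← Finset.range_eq_Ico]
          apply Finset.sum_congr rfl
          intro n _
          rw [Finset.mul_sum]
          rw [← Finset.range_eq_Ico]
          apply Finset.sum_congr rfl
          intro k _
          simp only [bb]
          ring
      _ = ∑ k ∈ Finset.Ico 0 N, ∑ n ∈ Finset.Ico k N,
            bb k * ((n.choose k:ℝ)/2^(n+1)) :=
          (Finset.sum_Ico_Ico_comm 0 N (fun k n => bb k * ((n.choose k:ℝ)/2^(n+1)))).symm
      _ = ∑ k ∈ Finset.range N, bb k * ∑ n ∈ Finset.Ico k N, (n.choose k:ℝ)/2^(n+1) := by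
          rw [← Finset.range_eq_Ico]
          exact Finset.sum_congr rfl (fun k _ => (Finset.mul_sum _ _ _).symm)
  have swap2 : ∑ k ∈ Finset.range N, bb k * ∑ j ∈ Finset.range (k+1), (N.choose j:ℝ)
      = ∑ j ∈ Finset.range N, (N.choose j:ℝ) * (BB N - BB j) := by
    calc ∑ k ∈ Finset.range N, bb k * ∑ j ∈ Finset.range (k+1), (N.choose j:ℝ)
        = ∑ k ∈ Finset.Ico 0 N, ∑ j ∈ Finset.Ico 0 (k+1), (N.choose j:ℝ) * bb k := by
          rw [← Finset.range_eq_Ico]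
          apply Finset.sum_congr rfl
          intro k _
          rw [Finset.mul_sum]
          rw [← Finset.range_eq_Ico]
          apply Finset.sum_congr rfl
          intro j _
          ring
      _ = ∑ j ∈ Finset.Ico 0 N, ∑ k ∈ Finset.Ico j N, (N.choose j:ℝ) * bb k :=
          (Finset.sum_Ico_Ico_comm 0 N (fun j k => (N.choose j:ℝ) * bb k)).symm
      _ = ∑ j ∈ Finset.range N, (N.choose j:ℝ) * (BB N - BB j) := by
          rw [← Finset.range_eq_Ico]
          apply Finset.sum_congr rfl
          intro j hj
          rw [← Finset.mul_sum]
          congr 1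
          rw [Finset.sum_Ico_eq_sub _ (le_of_lt (Finset.mem_range.1 hj))]
          rfl
  rw [swap1]
  have step2 : ∑ k ∈ Finset.range N, bb k * ∑ n ∈ Finset.Ico k N, (n.choose k:ℝ)/2^(n+1)
      = BB N - (∑ k ∈ Finset.range N, bb k * ∑ j ∈ Finset.range (k+1), (N.choose j:ℝ))/2^N := by
    have h1 : ∀ k ∈ Finset.range N,
        bb k * ∑ n ∈ Finset.Ico k N, (n.choose k:ℝ)/2^(n+1)
          = bb k - (bb k * ∑ j ∈ Finset.range (k+1), (N.choose j:ℝ))/2^N := by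
      intro k _
      rw [my_w_closed]
      ring
    rw [Finset.sum_congr rfl h1, Finset.sum_sub_distrib, ← Finset.sum_div]
    rfl
  rw [step2, swap2]
  have hexp : ∑ j ∈ Finset.range N, (N.choose j:ℝ) * (BB N - BB j)
      = (2^N - 1) * BB N - ∑ j ∈ Finset.range N, (N.choose j:ℝ) * BB j := by
    simp only [mul_sub]
    rw [Finset.sum_sub_distrib, ← Finset.sum_mul, my_sum_choose_real]
  rw [hexp]
  have h2N : (2:ℝ)^N ≠ 0 := by positivity
  field_simp
  ring

/-- ∑_{n=0}^∞ (1/2^{n+1}) ∑_{k=0}^n (−1)^k C(n,k) ln((k+2)/(k+1)) converges to ln(π/2). -/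
theorem stmt_10 :
    Tendsto (fun N : ℕ => ∑ n ∈ Finset.range N,
        (1 / 2 ^ (n + 1) : ℝ) * ∑ k ∈ Finset.range (n + 1),
          (-1 : ℝ) ^ k * (n.choose k : ℝ) * Real.log ((k + 2) / (k + 1)))
      atTop (nhds (Real.log (Real.pi / 2))) := by
  set L := Real.log (Real.pi / 2) with hL
  have hBB := my_BB_tendsto
  have hc : Tendsto (fun j => BB j - L) atTop (nhds 0) := by
    have := hBB.sub_const L
    simpa [← hL] using this
  have h1 := my_key_reg hc
  have hhalf : Tendsto (fun N : ℕ => ((1:ℝ)/2)^N) atTop (nhds 0) :=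
    tendsto_pow_atTop_nhds_zero_of_lt_one (by norm_num) (by norm_num)
  have t1 : Tendsto (fun N : ℕ => BB N * ((1:ℝ)/2)^N) atTop (nhds 0) := by
    simpa using hBB.mul hhalf
  have t3 : Tendsto (fun N : ℕ => L*(1 - ((1:ℝ)/2)^N)) atTop (nhds L) := by
    have h := (tendsto_const_nhds (x := L) (f := atTop)).mul
      ((tendsto_const_nhds (x := (1:ℝ)) (f := atTop)).sub hhalf)
    simpa using h
  have total := (t1.add h1).add t3
  rw [add_zero, zero_add] at total
  refine total.congr (fun N => ?_)
  show BB N * ((1:ℝ)/2)^N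
      + (∑ j ∈ Finset.range N, (N.choose j : ℝ) * (BB j - L))/2^N
      + L*(1 - ((1:ℝ)/2)^N) = _
  rw [my_partial_sum N]
  have hexp : ∑ j ∈ Finset.range N, (N.choose j:ℝ) * (BB j - L)
      = (∑ j ∈ Finset.range N, (N.choose j:ℝ) * BB j) - L*(2^N - 1) := by
    simp only [mul_sub]
    rw [Finset.sum_sub_distrib, ← Finset.sum_mul, my_sum_choose_real]
    ring
  rw [hexp]
  have hpow : ((1:ℝ)/2)^N = 1/2^N := by rw [div_pow, one_pow]
  rw [hpow]
  have h2N : (2:ℝ)^N ≠ 0 := by positivity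
  field_simp
  ring
end
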